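/- Every complex root s of the polynomial p(s) = ∑_{i=0}^{n} C(s+n−i, n) (equivalently of C(s+n+1, n+1) − C(s, n+1)) has real part equal to −1/2. -/

import Mathlib

/-- The generalized binomial coefficient `C(y,m) = (1/m!)·∏_{j<m} (y-j)`. -/
noncomputable def genBinom (y : ℂ) (m : ℕ) : ℂ :=
  (∏ j ∈ Finset.range m, (y - j)) / (Nat.factorial m)

lemma pascal (y : ℂ) (m : ℕ) :
    genBinom (y + 1) (m + 1) - genBinom y (m + 1) = genBinom y m := by
  unfold genBinom
  have h1 : ∏ j ∈ Finset.range (m + 1), (y + 1 - j)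
      = (∏ j ∈ Finset.range m, (y - j)) * (y + 1) := by
    rw [Finset.prod_range_succ' (fun j => y + 1 - (j : ℕ))]
    congr 1
    · exact Finset.prod_congr rfl (fun j _ => by push_cast; ring
      )
    · norm_num
  have h2 : ∏ j ∈ Finset.range (m + 1), (y - j)
      = (∏ j ∈ Finset.range m, (y - j)) * (y - m) := Finset.prod_range_succ _ _
  rw [h1, h2, Nat.factorial_succ]
  have hm : ((m.factorial : ℂ)) ≠ 0 := Nat.cast_ne_zero.mpr m.factorial_ne_zero
  have hm1 : ((m : ℂ) + 1) ≠ 0 := Nat.cast_add_one_ne_zero m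
  push_cast
  field_simp
  ring

lemma telescope (n : ℕ) (s : ℂ) :
    ∑ i ∈ Finset.range (n + 1), genBinom (s + n - i) n
      = genBinom (s + n + 1) (n + 1) - genBinom s (n + 1) := by
  have h : ∀ i ∈ Finset.range (n + 1), genBinom (s + n - i) n
      = (fun i : ℕ => genBinom (s + n + 1 - i) (n + 1)) i
        - (fun i : ℕ => genBinom (s + n + 1 - i) (n + 1)) (i + 1) := by
    intro i _
    have e1 : s + (n : ℂ) + 1 - i = (s + n - i) + 1 := by ring
    have e2 : s + (n : ℂ) + 1 - ((i : ℕ) + 1 : ℕ) = s + n - i := by push_cast; ring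
    simp only [e1, e2]
    exact (pascal (s + n - i) n).symm
  rw [Finset.sum_congr rfl h, Finset.sum_range_sub']
  have e3 : s + (n : ℂ) + 1 - ((0 : ℕ) : ℂ) = s + n + 1 := by norm_num
  have e4 : s + (n : ℂ) + 1 - ((n + 1 : ℕ) : ℂ) = s := by push_cast; ring
  rw [e3, e4]

lemma prod_lt_prod_aux {m : ℕ} (hm : 0 < m) (f g : ℕ → ℝ)
    (hf : ∀ i ∈ Finset.range m, 0 ≤ f i)
    (h : ∀ i ∈ Finset.range m, f i < g i) :
    ∏ i ∈ Finset.range m, f i < ∏ i ∈ Finset.range m, g i := by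
  by_cases h0 : ∀ i ∈ Finset.range m, 0 < f i
  · exact Finset.prod_lt_prod_of_nonempty h0 h (Finset.nonempty_range_iff.mpr hm.ne')
  · push_neg at h0
    obtain ⟨i, hi, hfi⟩ := h0
    have hfi0 : f i = 0 := le_antisymm hfi (hf i hi)
    have : ∏ i ∈ Finset.range m, f i = 0 := Finset.prod_eq_zero hi hfi0
    rw [this]
    exact Finset.prod_pos (fun j hj => lt_of_le_of_lt (hf j hj) (h j hj))

/-- Every complex root of `p(s) = ∑_{i=0}^{n} C(s+n-i, n)` has real part `-1/2`. -/
theorem roots_S_n_one_re (n : ℕ) (hn : 1 ≤ n) (s : ℂ)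
    (hs : ∑ i ∈ Finset.range (n + 1), genBinom (s + n - i) n = 0) :
    s.re = -1/2 := by
  rw [telescope] at hs
  have hfac : ((Nat.factorial (n+1) : ℂ)) ≠ 0 :=
    Nat.cast_ne_zero.mpr (Nat.factorial_ne_zero _)
  have hprod : ∏ j ∈ Finset.range (n + 1), (s + n + 1 - j)
      = ∏ j ∈ Finset.range (n + 1), (s - j) := by
    have := sub_eq_zero.mp hs
    unfold genBinom at this
    field_simp at this
    exact this
  -- reindex LHS: ∏_{j<n+1} (s + n + 1 - j) = ∏_{j<n+1} (s + (j+1))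
  have hre : ∏ j ∈ Finset.range (n + 1), (s + ((j : ℂ) + 1))
      = ∏ j ∈ Finset.range (n + 1), (s - j) := by
    rw [← hprod, ← Finset.prod_range_reflect (fun j => s + ((j : ℂ) + 1)) (n + 1)]
    refine Finset.prod_congr rfl (fun j hj => ?_)
    rw [Finset.mem_range] at hj
    have hj' : j ≤ n := Nat.lt_succ_iff.mp hj
    have : ((n + 1 - 1 - j : ℕ) : ℂ) = (n : ℂ) - j := by
      simp only [Nat.add_sub_cancel]
      push_cast [Nat.cast_sub hj']
      ring
    rw [this]; ring
  -- modulus comparison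
  have habs : ‖∏ j ∈ Finset.range (n + 1), (s + ((j : ℂ) + 1))‖
      = ‖∏ j ∈ Finset.range (n + 1), (s - j)‖ := by rw [hre]
  rw [norm_prod, norm_prod] at habs
  by_contra hne
  have key : ∀ j : ℕ, (‖s + ((j : ℂ) + 1)‖)^2 - (‖s - (j : ℂ)‖)^2
      = (2 * s.re + 1) * (2 * j + 1) := by
    intro j
    rw [Complex.sq_norm, Complex.sq_norm, Complex.normSq_apply, Complex.normSq_apply]
    simp [Complex.add_re, Complex.add_im, Complex.sub_re, Complex.sub_im]
    ring
  rcases lt_or_gt_of_ne (fun h : 2 * s.re + 1 = 0 => hne (by linarith)) with hlt | hgt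
  · -- 2 s.re + 1 < 0 : |s+(j+1)| < |s-j|
    have hstep : ∀ j ∈ Finset.range (n + 1),
        ‖s + ((j : ℂ) + 1)‖ < ‖s - (j : ℂ)‖ := by
      intro j _
      have h2 := key j
      have hj1 : (0:ℝ) < 2 * (j:ℝ) + 1 := by positivity
      nlinarith [norm_nonneg (s + ((j : ℂ) + 1)), norm_nonneg (s - (j:ℂ)),
        mul_pos_of_neg_of_neg hlt (neg_neg_iff_pos.mpr hj1)]
    have := prod_lt_prod_aux (Nat.succ_pos n)
      (fun j => ‖s + ((j : ℂ) + 1)‖) (fun j => ‖s - (j : ℂ)‖)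
      (fun j _ => norm_nonneg _) hstep
    rw [habs] at this
    exact lt_irrefl _ this
  · have hstep : ∀ j ∈ Finset.range (n + 1),
        ‖s - (j : ℂ)‖ < ‖s + ((j : ℂ) + 1)‖ := by
      intro j _
      have h2 := key j
      have hj1 : (0:ℝ) < 2 * (j:ℝ) + 1 := by positivity
      nlinarith [norm_nonneg (s + ((j : ℂ) + 1)), norm_nonneg (s - (j:ℂ)),
        mul_pos hgt hj1]
    have := prod_lt_prod_aux (Nat.succ_pos n)
      (fun j => ‖s - (j : ℂ)‖) (fun j => ‖s + ((j : ℂ) + 1)‖)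
      (fun j _ => norm_nonneg _) hstep
    rw [habs] at this
    exact lt_irrefl _ this
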